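/- For all integers 1 ≤ n ≤ m, ρ(n) + ρ(m) − log_φ n ≤ ρ(m+n), where φ = (1+√5)/2 is the golden ratio and log_φ the logarithm in base φ. -/

import Mathlib

/-- The factor `w[i..j]` of `w`, with 1-based inclusive indices. -/
def factor (w : List Bool) (i j : ℕ) : List Bool :=
  (w.drop (i - 1)).take (j + 1 - i)

/-- `p` is a period of `w` (1-based: `w[k+p] = w[k]` for `1 ≤ k ≤ |w| - p`). -/
def IsPeriod (w : List Bool) (p : ℕ) : Prop :=
  1 ≤ p ∧ ∀ k, k + p < w.length → w[k]? = w[k + p]?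

/-- The least period of `w`. -/
noncomputable def leastPeriod (w : List Bool) : ℕ := sInf {p | IsPeriod w p}

/-- `p` is the least period of `w`. -/
def IsLeastPeriod (w : List Bool) (p : ℕ) : Prop :=
  IsPeriod w p ∧ ∀ q, IsPeriod w q → p ≤ q

/-- The lexicographic order `≺_c` on binary words in which the letter `c` is smaller. -/
def LexLt (c : Bool) : List Bool → List Bool → Prop :=
  List.Lex (fun a b => a = c ∧ b = !c)

/-- `w` is a `≺_c`-Lyndon word. -/
def IsLyndon (c : Bool) (w : List Bool) : Prop :=
  w ≠ [] ∧ ∀ u v : List Bool, u ≠ [] → v ≠ [] → w = u ++ v →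
    w ≠ v ++ u ∧ LexLt c w (v ++ u)

/-- `w` is primitive: it is not a power of a shorter word. -/
def Primitive (w : List Bool) : Prop :=
  w ≠ [] ∧ ∀ (u : List Bool) (k : ℕ), u.length < w.length → w ≠ (List.replicate k u).flatten

/-- `w` and `w'` are conjugate words. -/
def Conjugate (w w' : List Bool) : Prop := ∃ u v, w = u ++ v ∧ w' = v ++ u

/-- The interval `[i..j]` (1-based) is a run of `w`. -/
def IsRun (w : List Bool) (i j : ℕ) : Prop :=
  1 ≤ i ∧ i < j ∧ j ≤ w.length ∧
  2 * leastPeriod (factor w i j) ≤ j - i + 1 ∧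
  (i = 1 ∨ w[i - 2]? ≠ w[i - 2 + leastPeriod (factor w i j)]?) ∧
  (j = w.length ∨ w[j]? ≠ w[j - leastPeriod (factor w i j)]?)

/-- `c_w(i)`: the letter different from `w[i-1]` (1-based). -/
def cpar (w : List Bool) (i : ℕ) : Bool := !(w.getD (i - 2) false)

/-- `L_w(i)`: the largest `j` such that `w[i..j]` is `≺_{c_w(i)}`-Lyndon. -/
noncomputable def Lpar (w : List Bool) (i : ℕ) : ℕ :=
  sSup {j | j ≤ w.length ∧ IsLyndon (cpar w i) (factor w i j)}

/-- `D_w(i) = L_w(i) - i + 1`. -/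
noncomputable def Dpar (w : List Bool) (i : ℕ) : ℕ := Lpar w i + 1 - i

/-- `ST_w(i)`: the least `j` such that `D_w(i)` is a period of `w[j..L_w(i)]`. -/
noncomputable def STpar (w : List Bool) (i : ℕ) : ℕ :=
  sInf {j | 1 ≤ j ∧ IsPeriod (factor w j (Lpar w i)) (Dpar w i)}

/-- `E_w(i)`: the largest `j` such that `D_w(i)` is a period of `w[i..j]`. -/
noncomputable def Epar (w : List Bool) (i : ℕ) : ℕ :=
  sSup {j | j ≤ w.length ∧ IsPeriod (factor w i j) (Dpar w i)}

/-- `R_w(i) = [ST_w(i)..E_w(i)]`. -/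
noncomputable def Rmap (w : List Bool) (i : ℕ) : ℕ × ℕ := (STpar w i, Epar w i)

/-- `r_w(c)` for the run `[s..e]`: the least `i` with `R_w(i) = [s..e]` and
`w[i..L_w(i)]` a `≺_c`-Lyndon word. -/
noncomputable def rpar (w : List Bool) (s e : ℕ) (c : Bool) : ℕ :=
  sInf {i | Rmap w i = (s, e) ∧ IsLyndon c (factor w i (Lpar w i))}

/-- `f_w([s..e])`: the letter `c` with `r_w(c) ≥ r_w(c̄)` (`0` if the least period is one). -/
noncomputable def fpar (w : List Bool) (s e : ℕ) : Bool :=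
  if leastPeriod (factor w s e) = 1 then false
  else if rpar w s e false ≤ rpar w s e true then true else false

/-- The position `i` (1-based, `1 < i ≤ |w|`) is lost in `w`. -/
def Lost (w : List Bool) (i : ℕ) : Prop :=
  1 < i ∧ i ≤ w.length ∧
  ((Epar w i < w.length ∧ 1 < STpar w i ∧ ¬ IsRun w (STpar w i) (Epar w i)) ∨
   (Epar w i < w.length ∧ IsRun w (STpar w i) (Epar w i) ∧ i + Dpar w i ≤ Epar w i) ∨
   (Epar w i = w.length ∧ IsRun w (STpar w i) (Epar w i) ∧ i + Dpar w i ≤ Epar w i ∧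
     STpar w i < i ∧
     IsLyndon (fpar w (STpar w i) (Epar w i)) (factor w i (Lpar w i))))

/-- The number of lost positions of `w` that are `≤ p`. -/
noncomputable def lostCount (w : List Bool) (p : ℕ) : ℕ := {q | Lost w q ∧ q ≤ p}.ncard

/-- The prefix-frequency predicate `P_d(w)`: every lost position `p` of `w`, being the
`j`-th lost position, satisfies `p - 1 ≥ j·d`. -/
def Pd (d : ℝ) (w : List Bool) : Prop :=
  ∀ p, Lost w p → (lostCount w p : ℝ) * d ≤ (p : ℝ) - 1

/-- The number of runs of `w`. -/
noncomputable def numRuns (w : List Bool) : ℕ := {ij : ℕ × ℕ | IsRun w ij.1 ij.2}.ncard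

/-- `ρ(n)`: the maximal number of runs in a binary word of length `n`. -/
noncomputable def rho (n : ℕ) : ℕ := sSup {k | ∃ w : List Bool, w.length = n ∧ numRuns w = k}

/-- The golden ratio. -/
noncomputable def goldenRatio' : ℝ := (1 + Real.sqrt 5) / 2

/-- positions `k, k+p` with `k+p < t` agree in `x` -/
def PPx (x : List Bool) (t p : ℕ) : Prop := ∀ k, k + p < t → x[k]? = x[k + p]?

lemma PPx.mono {x : List Bool} {t s p : ℕ} (h : PPx x t p) (hs : s ≤ t) : PPx x s p :=
  fun k hk => h k (lt_of_lt_of_le hk hs)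

/-- Lemma H: a small period of a long-enough prefix propagates. -/
lemma ppH {x : List Bool} {L P G ℓ : ℕ} (h1 : 1 ≤ P) (hP : PPx x L P) (hG : PPx x ℓ G)
    (hℓ : P + G ≤ ℓ) : PPx x L G := by
  intro k
  induction k using Nat.strong_induction_on with
  | _ k ih =>
    intro hk
    by_cases hcase : k + G < ℓ
    · exact hG k hcase
    · have hkP : P ≤ k := by omega
      have e1 : x[k - P]? = x[k]? := by
        have := hP (k - P) (by omega)
        rwa [Nat.sub_add_cancel hkP] at this
      have e2 : x[k - P + G]? = x[k + G]? := by
        have := hP (k - P + G) (by omega)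
        rwa [show k - P + G + P = k + G by omega] at this
      have e3 : x[k - P]? = x[k - P + G]? := ih (k - P) (by omega) (by omega)
      rw [← e1, e3, e2]

lemma ppSub {x : List Bool} {L a b : ℕ} (ha : 1 ≤ a) (hb : 1 ≤ b) (hlt : b < a)
    (hpa : PPx x L a) (hpb : PPx x L b) (hL : a + b ≤ L) : PPx x L (a - b) := by
  intro k hk
  by_cases hc : k + a < L
  · have e1 : x[k]? = x[k + a]? := hpa k hc
    have e2 : x[k + (a - b)]? = x[k + a]? := by
      have := hpb (k + (a - b)) (by omega)
      rwa [show k + (a - b) + b = k + a by omega] at this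
    rw [e1, ← e2]
  · have hkb : b ≤ k := by omega
    have e1 : x[k - b]? = x[k]? := by
      have := hpb (k - b) (by omega)
      rwa [Nat.sub_add_cancel hkb] at this
    have e2 : x[k - b]? = x[k + (a - b)]? := by
      have := hpa (k - b) (by omega)
      rwa [show k - b + a = k + (a - b) by omega] at this
    rw [← e1, e2]

/-- weak Fine–Wilf -/
lemma ppFW (x : List Bool) :
    ∀ N a b L, a + b ≤ N → 1 ≤ a → 1 ≤ b → PPx x L a → PPx x L b → a + b ≤ L →
      PPx x L (Nat.gcd a b) := by
  intro N
  induction N with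
  | zero => intro a b L h ha; omega
  | succ N ih =>
    intro a b L hN ha hb hpa hpb hL
    rcases lt_trichotomy a b with h | h | h
    · have hab : PPx x L (b - a) := ppSub hb ha h hpb hpa (by omega)
      have := ih a (b - a) L (by omega) ha (by omega) hpa hab (by omega)
      rwa [Nat.gcd_sub_self_right (by omega)] at this
    · subst h
      simpa [Nat.gcd_self] using hpa
    · have hab : PPx x L (a - b) := ppSub ha hb h hpa hpb (by omega)
      have := ih (a - b) b L (by omega) (by omega) hb hab hpb (by omega)
      rwa [Nat.gcd_sub_self_left (by omega)] at this

lemma ppChain {x : List Bool} {t g : ℕ} (hp : PPx x t g) :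
    ∀ j k, k + j * g < t → x[k]? = x[k + j * g]? := by
  intro j
  induction j with
  | zero => simp
  | succ j ih =>
    intro k hk
    have e : (j + 1) * g = j * g + g := by ring
    have h1 : x[k]? = x[k + j * g]? := ih k (by omega)
    have h2 : x[k + j * g]? = x[k + j * g + g]? := hp (k + j * g) (by omega)
    rw [h1, h2, show k + j * g + g = k + (j + 1) * g by omega]

lemma ppDouble {x : List Bool} {p γ : ℕ} (h2p : PPx x (2 * p) p) (hA : PPx x p γ)
    (hdvd : γ ∣ p) (hγ1 : 1 ≤ γ) (hlt : γ < p) : PPx x (2 * p) γ := by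
  intro k hk
  by_cases h1 : k + γ < p
  · exact hA k h1
  · by_cases h2 : p ≤ k
    · have e1 : x[k - p]? = x[k]? := by
        have := h2p (k - p) (by omega)
        rwa [Nat.sub_add_cancel h2] at this
      have e2 : x[k - p + γ]? = x[k + γ]? := by
        have := h2p (k - p + γ) (by omega)
        rwa [show k - p + γ + p = k + γ by omega] at this
      have e3 : x[k - p]? = x[k - p + γ]? := hA (k - p) (by omega)
      rw [← e1, e3, e2]
    · push_neg at h1 h2
      have e2 : x[k + γ - p]? = x[k + γ]? := by
        have := h2p (k + γ - p) (by omega)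
        rwa [Nat.sub_add_cancel (by omega)] at this
      obtain ⟨c, hc⟩ := hdvd
      have hc1 : 1 ≤ c := by
        rcases Nat.eq_zero_or_pos c with h | h
        · subst h; omega
        · exact h
      have hmul : (c - 1) * γ = p - γ := by
        have : c * γ = p := by rw [hc]; ring
        have e : (c - 1) * γ = c * γ - γ := by
          rw [Nat.sub_mul, one_mul]
        omega
      have e3 : x[k + γ - p]? = x[k]? := by
        have := ppChain hA (c - 1) (k + γ - p) (by omega)
        rwa [show k + γ - p + (c - 1) * γ = k by omega] at this
      rw [← e3, e2]

/-- A prefix square of least period `p`. -/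
def SqP (x : List Bool) (p : ℕ) : Prop :=
  1 ≤ p ∧ 2 * p ≤ x.length ∧ PPx x (2 * p) p ∧ ∀ g, 1 ≤ g → PPx x (2 * p) g → p ≤ g

/-- The three-squares lemma (run version). -/
lemma three_squares {x : List Bool} {p q r : ℕ} (hp : SqP x p) (hq : SqP x q) (hr : SqP x r)
    (hpq : p < q) (hqr : q < r) : p + q ≤ r := by
  by_contra hcon
  push_neg at hcon
  obtain ⟨hp1, hp2, hpP, hpM⟩ := hp
  obtain ⟨hq1, hq2, hqP, hqM⟩ := hq
  obtain ⟨hr1, hr2, hrP, hrM⟩ := hr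
  set d := r - q with hd
  have hd1 : 1 ≤ d := by omega
  have hdp : d < p := by omega
  -- Step 1 : prefix of length q has period d
  have hB : PPx x q d := by
    intro k hk
    have e1 : x[k]? = x[k + r]? := hrP k (by omega)
    have e2 : x[k + d]? = x[k + d + q]? := hqP (k + d) (by omega)
    rw [e1, e2, show k + d + q = k + r by omega]
  -- Step 2 : q < p + d
  have hqpd : q < p + d := by
    by_contra hge
    push_neg at hge
    have : PPx x (2 * p) d := ppH hp1 hpP hB (by omega)
    have := hpM d hd1 this
    omega
  set e := q - p with he
  have he1 : 1 ≤ e := by omega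
  have hed : e < d := by omega
  set f := p - d with hf
  have hf1 : 1 ≤ f := by omega
  -- Step 3a : prefix of length p has period e
  have hAe : PPx x p e := by
    intro k hk
    have e1 : x[k + e]? = x[k + e + p]? := hpP (k + e) (by omega)
    have e2 : x[k]? = x[k + q]? := hqP k (by omega)
    rw [e2, show k + q = k + e + p by omega, ← e1]
  -- Step 3b : prefix of length p has period d
  have hAd : PPx x p d := fun k hk => hB k (by omega)
  -- Step 3c : prefix of length e+f has period f
  have hEF : PPx x (e + f) f := by
    intro k hk
    have e1 : x[k + f]? = x[k + f + d]? := hB (k + f) (by omega)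
    have e2 : x[k]? = x[k + p]? := hpP k (by omega)
    rw [e2, show k + p = k + f + d by omega, ← e1]
  -- Step 3d : prefix of length p has period f
  have hAf : PPx x p f := ppH he1 hAe hEF (le_refl _)
  -- Step 3e : FW with periods f and d
  have hg2 : PPx x p (Nat.gcd f d) := ppFW x (f + d) f d p (le_refl _) hf1 hd1 hAf hAd (by omega)
  set g2 := Nat.gcd f d with hg2def
  have hg21 : 1 ≤ g2 := Nat.gcd_pos_of_pos_left d hf1
  have hg2f : g2 ≤ f := Nat.gcd_le_left _ hf1
  -- Step 3f : FW with periods e and g2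
  have hγpp : PPx x p (Nat.gcd e g2) :=
    ppFW x (e + g2) e g2 p (le_refl _) he1 hg21 hAe hg2 (by omega)
  set γ := Nat.gcd e g2 with hγdef
  have hγ1 : 1 ≤ γ := Nat.gcd_pos_of_pos_left g2 he1
  have hγg2 : γ ≤ g2 := Nat.gcd_le_right _ hg21
  have hγdvd : γ ∣ p := by
    have h1 : γ ∣ g2 := Nat.gcd_dvd_right e g2
    have h2 : γ ∣ f := h1.trans (Nat.gcd_dvd_left f d)
    have h3 : γ ∣ d := h1.trans (Nat.gcd_dvd_right f d)
    have := Nat.dvd_add h2 h3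
    rwa [show f + d = p by omega] at this
  have hγp : γ < p := by omega
  have : PPx x (2 * p) γ := ppDouble hpP hγpp hγdvd hγ1 hγp
  have := hpM γ hγ1 this
  omega

open goldenRatio in
lemma gold_pow_le_two_fib : ∀ k : ℕ, Real.goldenRatio ^ k ≤ 2 * (Nat.fib (k + 1) : ℝ) := by
  intro k
  induction k using Nat.strong_induction_on with
  | _ k ih =>
    match k with
    | 0 => norm_num
    | 1 =>
      rw [pow_one]
      norm_num [Nat.fib]
      linarith [Real.goldenRatio_lt_two]
    | (k + 2) =>
      have h1 := ih k (by omega)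
      have h2 := ih (k + 1) (by omega)
      have h3 := Real.goldenRatio_pow_sub_goldenRatio_pow k
      have h4 : Nat.fib (k + 3) = Nat.fib (k + 1) + Nat.fib (k + 2) := Nat.fib_add_two
      have h5 : (Nat.fib (k + 3) : ℝ) = (Nat.fib (k + 1) : ℝ) + (Nat.fib (k + 2) : ℝ) := by
        exact_mod_cast h4
      have : Real.goldenRatio ^ (k + 2) = Real.goldenRatio ^ (k + 1) + Real.goldenRatio ^ k := by linarith
      rw [this, show k + 2 + 1 = k + 3 from rfl, h5]
      linarith

lemma finset_fib_pair : ∀ k : ℕ, 2 ≤ k → ∀ T : Finset ℕ,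
    (∀ a ∈ T, ∀ b ∈ T, ∀ c ∈ T, a < b → b < c → a + b ≤ c) → (∀ a ∈ T, 1 ≤ a) →
    T.card = k → ∃ a ∈ T, ∃ b ∈ T, a < b ∧ Nat.fib k ≤ a ∧ Nat.fib (k + 1) ≤ b := by
  intro k
  induction k with
  | zero => omega
  | succ k ih =>
    intro hk2 T hgrow h1 hcard
    by_cases hk : k < 2
    · have hk1 : k = 1 := by omega
      subst hk1
      obtain ⟨a, b, hab, hT⟩ := Finset.card_eq_two.1 hcard
      have haT : a ∈ T := by simp [hT]
      have hbT : b ∈ T := by simp [hT]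
      have ha1 : 1 ≤ a := h1 a haT
      have hb1 : 1 ≤ b := h1 b hbT
      have hf2 : Nat.fib (1 + 1) = 1 := rfl
      have hf3 : Nat.fib (1 + 1 + 1) = 2 := rfl
      rcases Nat.lt_or_ge a b with h | h
      · exact ⟨a, haT, b, hbT, h, by omega, by omega⟩
      · have h' : b < a := by omega
        exact ⟨b, hbT, a, haT, h', by omega, by omega⟩
    · have hne : T.Nonempty := by rw [← Finset.card_pos]; omega
      have hMT : T.max' hne ∈ T := T.max'_mem hne
      set M := T.max' hne with hM
      set T' := T.erase M with hT'
      have hcard' : T'.card = k := by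
        rw [hT', Finset.card_erase_of_mem hMT, hcard]
        omega
      obtain ⟨a, ha, b, hb, hab, hfa, hfb⟩ := ih (by omega) T'
        (fun a ha b hb c hc hab hbc => hgrow a (Finset.mem_of_mem_erase ha) b
          (Finset.mem_of_mem_erase hb) c (Finset.mem_of_mem_erase hc) hab hbc)
        (fun a ha => h1 a (Finset.mem_of_mem_erase ha)) hcard'
      have hbT : b ∈ T := Finset.mem_of_mem_erase hb
      have haT : a ∈ T := Finset.mem_of_mem_erase ha
      have hbM : b < M := lt_of_le_of_ne (T.le_max' b hbT) (Finset.ne_of_mem_erase hb)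
      refine ⟨b, hbT, M, hMT, hbM, hfb, ?_⟩
      have hsum := hgrow a haT b hbT M hMT hab hbM
      have hfib : Nat.fib (k + 2) = Nat.fib k + Nat.fib (k + 1) := Nat.fib_add_two
      have hnorm : Nat.fib (k + 1 + 1) = Nat.fib (k + 2) := by norm_num
      omega

open goldenRatio in
lemma finset_card_le_logb (T : Finset ℕ) (n : ℕ) (hn : 1 ≤ n)
    (hgrow : ∀ a ∈ T, ∀ b ∈ T, ∀ c ∈ T, a < b → b < c → a + b ≤ c)
    (h1 : ∀ a ∈ T, 1 ≤ a) (h2 : ∀ a ∈ T, 2 * a ≤ n) :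
    (T.card : ℝ) ≤ Real.logb Real.goldenRatio n := by
  set k := T.card with hk
  rcases Nat.lt_or_ge k 1 with h | h
  · have hk0 : k = 0 := by omega
    rw [hk0]
    simpa using Real.logb_nonneg Real.one_lt_goldenRatio (by exact_mod_cast hn)
  · have hex : ∃ t ∈ T, Nat.fib (k + 1) ≤ t := by
      rcases Nat.lt_or_ge k 2 with h2' | h2'
      · have hk1 : k = 1 := by omega
        have hne : T.Nonempty := by rw [← Finset.card_pos]; omega
        obtain ⟨t, ht⟩ := hne
        have hf2 : Nat.fib (1 + 1) = 1 := rfl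
        exact ⟨t, ht, by rw [hk1]; have := h1 t ht; omega⟩
      · obtain ⟨a, ha, b, hb, hab, hfa, hfb⟩ := finset_fib_pair k h2' T hgrow h1 hk.symm
        exact ⟨b, hb, hfb⟩
    obtain ⟨t, htT, htf⟩ := hex
    have hfib : 2 * (Nat.fib (k + 1) : ℝ) ≤ (n : ℝ) := by
      have ht2 := h2 t htT
      have hc1 : (2 * t : ℝ) ≤ (n : ℝ) := by exact_mod_cast ht2
      have hc2 : (Nat.fib (k + 1) : ℝ) ≤ (t : ℝ) := by exact_mod_cast htf
      linarith
    have hpow : Real.goldenRatio ^ k ≤ (n : ℝ) := le_trans (gold_pow_le_two_fib k) hfib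
    have hn0 : (0 : ℝ) < n := by exact_mod_cast hn
    rw [Real.le_logb_iff_rpow_le Real.one_lt_goldenRatio hn0, Real.rpow_natCast]
    exact hpow

lemma isPeriod_of_length_le {w : List Bool} {p : ℕ} (h1 : 1 ≤ p) (h : w.length ≤ p) :
    IsPeriod w p :=
  ⟨h1, fun k hk => absurd hk (by omega)⟩

lemma leastPeriod_isPeriod (w : List Bool) : IsPeriod w (leastPeriod w) := by
  have h : (w.length + 1) ∈ {p | IsPeriod w p} := by
    show IsPeriod w (w.length + 1)
    exact isPeriod_of_length_le (by omega) (by omega)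
  exact Nat.sInf_mem ⟨_, h⟩

lemma leastPeriod_le {w : List Bool} {p : ℕ} (h : IsPeriod w p) : leastPeriod w ≤ p :=
  Nat.sInf_le (show p ∈ {p | IsPeriod w p} from h)

lemma leastPeriod_pos (w : List Bool) : 1 ≤ leastPeriod w := (leastPeriod_isPeriod w).1

lemma factor_getElem? (w : List Bool) (i t k : ℕ) (hk : k < t + 1 - i) :
    (factor w i t)[k]? = w[i - 1 + k]? := by
  unfold factor
  rw [List.getElem?_take_of_lt hk, List.getElem?_drop]

lemma factor_length (w : List Bool) {i t : ℕ} (h1 : 1 ≤ i) (ht : t ≤ w.length) :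
    (factor w i t).length = t + 1 - i := by
  unfold factor
  rw [List.length_take, List.length_drop]
  omega

lemma isPeriod_factor_iff {w : List Bool} {i t p : ℕ} (h1 : 1 ≤ i) (ht : t ≤ w.length) :
    IsPeriod (factor w i t) p ↔
      1 ≤ p ∧ ∀ k, k + p < t + 1 - i → w[i - 1 + k]? = w[i - 1 + (k + p)]? := by
  unfold IsPeriod
  rw [factor_length w h1 ht]
  constructor
  · rintro ⟨hp, h⟩
    refine ⟨hp, fun k hk => ?_⟩
    have h2 := h k hk
    rwa [factor_getElem? w i t k (by omega),
      factor_getElem? w i t (k + p) (by omega)] at h2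
  · rintro ⟨hp, h⟩
    refine ⟨hp, fun k hk => ?_⟩
    rw [factor_getElem? w i t k (by omega),
      factor_getElem? w i t (k + p) (by omega)]
    exact h k hk

lemma factor_one (v : List Bool) (j : ℕ) : factor v 1 j = v.take j := by
  simp [factor]

lemma isPeriod_take_iff {v : List Bool} {t p : ℕ} (ht : t ≤ v.length) :
    IsPeriod (v.take t) p ↔ 1 ≤ p ∧ PPx v t p := by
  rw [← factor_one, isPeriod_factor_iff (by omega) ht]
  unfold PPx
  simp

/-- From a run `[1..j]` of `v` we get a prefix square with least period structure. -/
lemma isRun_one_sq {v : List Bool} {j : ℕ} (h : IsRun v 1 j) :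
    SqP v (leastPeriod (v.take j)) ∧ 2 * leastPeriod (v.take j) ≤ j := by
  obtain ⟨-, h1j, hjn, hper, -, -⟩ := h
  rw [factor_one] at hper
  set p := leastPeriod (v.take j) with hp
  have hple : 2 * p ≤ j := by omega
  have hpp : IsPeriod (v.take j) p := leastPeriod_isPeriod _
  rw [isPeriod_take_iff hjn] at hpp
  obtain ⟨hp1, hPP⟩ := hpp
  refine ⟨⟨hp1, by omega, hPP.mono (by omega), ?_⟩, hple⟩
  intro g hg1 hg
  by_contra hlt
  push_neg at hlt
  have : PPx v j g := ppH hp1 hPP hg (by omega)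
  have : IsPeriod (v.take j) g := (isPeriod_take_iff hjn).2 ⟨hg1, this⟩
  have := leastPeriod_le this
  omega

lemma isRun_one_inj {v : List Bool} {j1 j2 : ℕ} (h1 : IsRun v 1 j1) (h2 : IsRun v 1 j2)
    (hlt : j1 < j2) : leastPeriod (v.take j1) ≠ leastPeriod (v.take j2) := by
  intro hpe
  obtain ⟨-, hj1, hlen1, hper1, -, hright⟩ := h1
  obtain ⟨-, hj2b, hlen2, hper2, -, -⟩ := h2
  rw [factor_one] at hper1 hright
  rw [factor_one] at hper2
  set p := leastPeriod (v.take j1) with hp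
  have hne : v[j1]? ≠ v[j1 - p]? := hright.resolve_left (by omega)
  have hp2 : IsPeriod (v.take j2) p := by rw [hpe]; exact leastPeriod_isPeriod _
  have hPP : PPx v j2 p := ((isPeriod_take_iff hlen2).1 hp2).2
  have hp1' : 1 ≤ p := leastPeriod_pos _
  have hple : 2 * p ≤ j1 := by omega
  have heq := hPP (j1 - p) (by omega)
  rw [Nat.sub_add_cancel (by omega)] at heq
  apply hne
  exact heq.symm

/-- The number of runs of `v` starting at position 1 is at most `log_φ |v|`. -/
lemma startOne_card_le {v : List Bool} (hn : 1 ≤ v.length) :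
    ({j | IsRun v 1 j}.ncard : ℝ) ≤ Real.logb Real.goldenRatio v.length := by
  have hfin : {j | IsRun v 1 j}.Finite :=
    (Set.finite_Iic v.length).subset (fun j hj => hj.2.2.1)
  set F := hfin.toFinset with hF
  set T := F.image (fun j => leastPeriod (v.take j)) with hT
  have hinj : Set.InjOn (fun j => leastPeriod (v.take j)) ↑F := by
    intro j1 hj1 j2 hj2 heq
    rw [hF, Set.Finite.coe_toFinset] at hj1 hj2
    by_contra hne
    rcases Nat.lt_or_ge j1 j2 with h | h
    · exact isRun_one_inj hj1 hj2 h heq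
    · exact isRun_one_inj hj2 hj1 (by omega) heq.symm
  have hcardT : T.card = F.card := Finset.card_image_of_injOn hinj
  have hncard : {j | IsRun v 1 j}.ncard = F.card := Set.ncard_eq_toFinset_card _ hfin
  have hmem : ∀ a ∈ T, ∃ j, IsRun v 1 j ∧ leastPeriod (v.take j) = a := by
    intro a ha
    rw [hT, Finset.mem_image] at ha
    obtain ⟨j, hj, hje⟩ := ha
    rw [hF, Set.Finite.mem_toFinset] at hj
    exact ⟨j, hj, hje⟩
  have hkey : (T.card : ℝ) ≤ Real.logb Real.goldenRatio v.length := by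
    apply finset_card_le_logb T v.length hn
    · intro a ha b hb c hc hab hbc
      obtain ⟨ja, hja, hjae⟩ := hmem a ha
      obtain ⟨jb, hjb, hjbe⟩ := hmem b hb
      obtain ⟨jc, hjc, hjce⟩ := hmem c hc
      have Sa := (isRun_one_sq hja).1
      have Sb := (isRun_one_sq hjb).1
      have Sc := (isRun_one_sq hjc).1
      rw [hjae] at Sa
      rw [hjbe] at Sb
      rw [hjce] at Sc
      exact three_squares Sa Sb Sc hab hbc
    · intro a ha
      obtain ⟨ja, hja, hjae⟩ := hmem a ha
      have := (isRun_one_sq hja).1.1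
      omega
    · intro a ha
      obtain ⟨ja, hja, hjae⟩ := hmem a ha
      have := (isRun_one_sq hja).1.2.1
      omega
  rw [hncard, ← hcardT]
  exact hkey

lemma factor_append_left (u v : List Bool) {i j : ℕ} (h1 : 1 ≤ i) (hj : j ≤ u.length) :
    factor (u ++ v) i j = factor u i j := by
  apply List.ext_getElem?
  intro k
  by_cases hk : k < j + 1 - i
  · rw [factor_getElem? _ i j k hk, factor_getElem? _ i j k hk,
      List.getElem?_append_left (by omega)]
  · have l1 : (factor (u ++ v) i j).length ≤ k := by
      rw [factor_length _ h1 (by rw [List.length_append]; omega)]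
      omega
    have l2 : (factor u i j).length ≤ k := by
      rw [factor_length _ h1 hj]
      omega
    rw [List.getElem?_eq_none l1, List.getElem?_eq_none l2]

lemma factor_append_right (u v : List Bool) {i j : ℕ} (h1 : 1 ≤ i) (hj : j ≤ v.length) :
    factor (u ++ v) (u.length + i) (u.length + j) = factor v i j := by
  apply List.ext_getElem?
  intro k
  by_cases hk : k < j + 1 - i
  · rw [factor_getElem? _ _ _ k (by omega), factor_getElem? v i j k hk,
      List.getElem?_append_right (by omega)]
    congr 1
    omega
  · have l1 : (factor (u ++ v) (u.length + i) (u.length + j)).length ≤ k := by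
      rw [factor_length _ (by omega) (by rw [List.length_append]; omega)]
      omega
    have l2 : (factor v i j).length ≤ k := by
      rw [factor_length _ h1 hj]
      omega
    rw [List.getElem?_eq_none l1, List.getElem?_eq_none l2]

lemma isRun_append_left {u v : List Bool} {i j : ℕ} (h : IsRun u i j) (hj : j < u.length) :
    IsRun (u ++ v) i j := by
  obtain ⟨hi1, hij, hju, hper, hleft, hright⟩ := h
  have hfac : factor (u ++ v) i j = factor u i j := factor_append_left u v hi1 (by omega)
  set p := leastPeriod (factor u i j) with hp
  have hp1 : 1 ≤ p := leastPeriod_pos _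
  refine ⟨hi1, hij, by rw [List.length_append]; omega, by rw [hfac]; omega, ?_, ?_⟩
  · rw [hfac]
    by_cases hione : i = 1
    · exact Or.inl hione
    · have hi2 : 2 ≤ i := by omega
      have hb : i - 2 + p ≤ j - 2 := by omega
      have hne : u[i - 2]? ≠ u[i - 2 + p]? := hleft.resolve_left hione
      right
      rw [List.getElem?_append_left (by omega), List.getElem?_append_left (by omega)]
      exact hne
  · rw [hfac]
    right
    have hne : u[j]? ≠ u[j - p]? := hright.resolve_left (by omega)
    rw [List.getElem?_append_left (by omega), List.getElem?_append_left (by omega)]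
    exact hne

lemma isRun_append_right (u : List Bool) {v : List Bool} {i j : ℕ} (h : IsRun v i j)
    (hi : 2 ≤ i) : IsRun (u ++ v) (u.length + i) (u.length + j) := by
  obtain ⟨hi1, hij, hjv, hper, hleft, hright⟩ := h
  have hfac := factor_append_right u v hi1 hjv
  set p := leastPeriod (factor v i j) with hp
  have hp1 : 1 ≤ p := leastPeriod_pos _
  have hpj : p < j := by omega
  refine ⟨by omega, by omega, by rw [List.length_append]; omega, by rw [hfac]; omega, ?_, ?_⟩
  · rw [hfac]
    right
    have hne : v[i - 2]? ≠ v[i - 2 + p]? := hleft.resolve_left (by omega)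
    rw [show u.length + i - 2 = u.length + (i - 2) by omega,
      show u.length + (i - 2) + p = u.length + (i - 2 + p) by omega,
      List.getElem?_append_right (by omega), List.getElem?_append_right (by omega),
      Nat.add_sub_cancel_left, Nat.add_sub_cancel_left]
    exact hne
  · rw [hfac]
    rcases hright with h0 | hne
    · left
      rw [List.length_append, h0]
    · right
      rw [show u.length + j - p = u.length + (j - p) by omega,
        List.getElem?_append_right (by omega), List.getElem?_append_right (by omega),
        Nat.add_sub_cancel_left, Nat.add_sub_cancel_left]
      exact hne

/-- The maximal right extension in `u ++ v` of a run of `u` ending at `|u|`. -/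
noncomputable def extEnd (u v : List Bool) (i : ℕ) : ℕ :=
  sSup {t | u.length ≤ t ∧ t ≤ u.length + v.length ∧
    IsPeriod (factor (u ++ v) i t) (leastPeriod (factor u i u.length))}

lemma isRun_extend (u v : List Bool) {i : ℕ} (h : IsRun u i u.length) :
    IsRun (u ++ v) i (extEnd u v i) ∧ u.length ≤ extEnd u v i := by
  obtain ⟨hi1, hij, -, hper, hleft, -⟩ := h
  set m := u.length with hmdef
  set p := leastPeriod (factor u i m) with hp
  have hp1 : 1 ≤ p := leastPeriod_pos _
  have hwlen : (u ++ v).length = m + v.length := by rw [List.length_append]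
  set S := {t | m ≤ t ∧ t ≤ m + v.length ∧ IsPeriod (factor (u ++ v) i t) p} with hS
  have hSm : m ∈ S := by
    refine ⟨le_refl _, by omega, ?_⟩
    rw [factor_append_left u v hi1 (le_refl _)]
    exact leastPeriod_isPeriod _
  have hbdd : BddAbove S := ⟨m + v.length, fun t ht => ht.2.1⟩
  have heS : extEnd u v i ∈ S := Nat.sSup_mem ⟨m, hSm⟩ hbdd
  set e := extEnd u v i with he
  obtain ⟨hme, hen, hpe⟩ := heS
  -- the least period of the extended factor is still p
  have hpe' := (isPeriod_factor_iff hi1 (by omega)).1 hpe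
  have hLP : leastPeriod (factor (u ++ v) i e) = p := by
    apply le_antisymm (leastPeriod_le hpe)
    set q := leastPeriod (factor (u ++ v) i e) with hq
    have hqper := (isPeriod_factor_iff hi1 (le_of_le_of_eq hen hwlen.symm)).1
      (leastPeriod_isPeriod (factor (u ++ v) i e))
    obtain ⟨hq1, hqpt⟩ := hqper
    have : IsPeriod (factor u i m) q := by
      rw [isPeriod_factor_iff hi1 (le_refl _)]
      refine ⟨hq1, fun k hk => ?_⟩
      have hval := hqpt k (by omega)
      rwa [List.getElem?_append_left (by omega), List.getElem?_append_left (by omega)] at hval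
    exact leastPeriod_le this
  refine ⟨⟨hi1, by omega, by omega, ?_, ?_, ?_⟩, hme⟩
  · rw [hLP]
    omega
  · rw [hLP]
    by_cases hione : i = 1
    · exact Or.inl hione
    · have hi2 : 2 ≤ i := by omega
      have hb : i - 2 + p ≤ m - 2 := by omega
      have hne : u[i - 2]? ≠ u[i - 2 + p]? := hleft.resolve_left hione
      right
      rw [List.getElem?_append_left (by omega), List.getElem?_append_left (by omega)]
      exact hne
  · rw [hLP]
    by_cases hlast : e = (u ++ v).length
    · exact Or.inl hlast
    · right
      intro heq
      have hnext : (e + 1) ∈ S := by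
        refine ⟨by omega, by omega, ?_⟩
        rw [isPeriod_factor_iff hi1 (by omega)]
        refine ⟨hp1, fun k hk => ?_⟩
        by_cases hkin : k + p < e + 1 - i
        · exact hpe'.2 k hkin
        · have hke : k + p = e + 1 - i := by omega
          have hip : i + p ≤ m := by omega
          have e1 : i - 1 + (k + p) = e := by omega
          have e2 : i - 1 + k = e - p := by omega
          rw [e1, e2]
          exact heq.symm
      have hsup : sSup S = e := by rw [he, hS, extEnd, hp, hmdef]
      have := le_csSup hbdd hnext
      rw [hsup] at this
      omega

lemma runs_finite (w : List Bool) : {ij : ℕ × ℕ | IsRun w ij.1 ij.2}.Finite := by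
  apply Set.Finite.subset ((Set.finite_Iic w.length).prod (Set.finite_Iic w.length))
  rintro ⟨i, j⟩ h
  simp only [Set.mem_prod, Set.mem_Iic]
  exact ⟨le_trans (le_of_lt h.2.1) h.2.2.1, h.2.2.1⟩

lemma numRuns_append (u v : List Bool) (hm : 1 ≤ u.length) (hn : 1 ≤ v.length) :
    numRuns u + numRuns v ≤ numRuns (u ++ v) + {j | IsRun v 1 j}.ncard := by
  classical
  set m := u.length with hmdef
  set RU := {ij : ℕ × ℕ | IsRun u ij.1 ij.2} with hRU
  set RV := {ij : ℕ × ℕ | IsRun v ij.1 ij.2} with hRV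
  set RW := {ij : ℕ × ℕ | IsRun (u ++ v) ij.1 ij.2} with hRW
  set RV1 := {ij : ℕ × ℕ | IsRun v ij.1 ij.2 ∧ ij.1 = 1} with hRV1
  set RV2 := {ij : ℕ × ℕ | IsRun v ij.1 ij.2 ∧ 2 ≤ ij.1} with hRV2
  set F : ℕ × ℕ → ℕ × ℕ := fun ij => if ij.2 < m then ij else (ij.1, extEnd u v ij.1) with hF
  set G : ℕ × ℕ → ℕ × ℕ := fun ij => (m + ij.1, m + ij.2) with hG
  -- basic facts about runs of u
  have hRUfacts : ∀ ij ∈ RU, ij.1 < m ∧ ij.2 ≤ m := by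
    rintro ⟨i, j⟩ hij
    exact ⟨lt_of_lt_of_le hij.2.1 hij.2.2.1, hij.2.2.1⟩
  -- F maps RU into RW
  have hFmem : ∀ ij ∈ RU, F ij ∈ RW := by
    rintro ⟨i, j⟩ hij
    by_cases hcase : j < m
    · have : F (i, j) = (i, j) := by simp [hF, hcase]
      rw [this]
      exact isRun_append_left hij hcase
    · have hj : j = m := by
        have := (hRUfacts _ hij).2
        omega
      have : F (i, j) = (i, extEnd u v i) := by simp [hF, hcase]
      rw [this]
      have hrun : IsRun u i u.length := by
        rw [← hmdef, ← hj]
        exact hij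
      exact (isRun_extend u v hrun).1
  -- first components are preserved by F and small
  have hFfst : ∀ ij : ℕ × ℕ, (F ij).1 = ij.1 := by
    rintro ⟨i, j⟩
    by_cases hcase : j < m <;> simp [hF, hcase]
  -- F is injective on RU
  have hFinj : Set.InjOn F RU := by
    rintro ⟨i1, j1⟩ h1 ⟨i2, j2⟩ h2 heq
    have hfst : i1 = i2 := by
      have e1 := hFfst (i1, j1)
      have e2 := hFfst (i2, j2)
      rw [heq] at e1
      simp only at e1 e2
      omega
    subst hfst
    by_cases c1 : j1 < m <;> by_cases c2 : j2 < m
    · simp only [hF, if_pos c1, if_pos c2] at heq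
      exact heq
    · exfalso
      have hj2 : j2 = m := by have := (hRUfacts _ h2).2; omega
      simp only [hF, if_pos c1, if_neg c2] at heq
      have hrun : IsRun u i1 u.length := by rw [← hmdef, ← hj2]; exact h2
      have hext := (isRun_extend u v hrun).2
      have : j1 = extEnd u v i1 := congrArg Prod.snd heq
      omega
    · exfalso
      have hj1 : j1 = m := by have := (hRUfacts _ h1).2; omega
      simp only [hF, if_neg c1, if_pos c2] at heq
      have hrun : IsRun u i1 u.length := by rw [← hmdef, ← hj1]; exact h1
      have hext := (isRun_extend u v hrun).2
      have : extEnd u v i1 = j2 := congrArg Prod.snd heq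
      omega
    · have hj1 : j1 = m := by have := (hRUfacts _ h1).2; omega
      have hj2 : j2 = m := by have := (hRUfacts _ h2).2; omega
      rw [hj1, hj2]
  -- G maps RV2 into RW, injectively
  have hGmem : ∀ ij ∈ RV2, G ij ∈ RW := by
    rintro ⟨i, j⟩ hij
    exact isRun_append_right u hij.1 hij.2
  have hGinj : Set.InjOn G RV2 := by
    rintro ⟨i1, j1⟩ h1 ⟨i2, j2⟩ h2 heq
    simp only [hG, Prod.mk.injEq] at heq
    have : i1 = i2 := by omega
    have : j1 = j2 := by omega
    simp_all
  -- images are disjoint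
  have hdisj : Disjoint (F '' RU) (G '' RV2) := by
    rw [Set.disjoint_left]
    rintro ⟨a, b⟩ hFim hGim
    obtain ⟨ij, hij, hfe⟩ := hFim
    obtain ⟨kl, hkl, hge⟩ := hGim
    have h1 : a = ij.1 := by
      have h := hFfst ij
      rw [hfe] at h
      simpa using h
    have h2 : a = m + kl.1 := by
      have h : (G kl).1 = m + kl.1 := rfl
      rw [hge] at h
      simpa using h
    have h3 : ij.1 < m := (hRUfacts _ hij).1
    have h4 : 2 ≤ kl.1 := hkl.2
    omega
  -- cardinalities
  have hRUfin : RU.Finite := runs_finite u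
  have hRVfin : RV.Finite := runs_finite v
  have hRWfin : RW.Finite := runs_finite (u ++ v)
  have hRV1fin : RV1.Finite := hRVfin.subset (fun ij h => h.1)
  have hRV2fin : RV2.Finite := hRVfin.subset (fun ij h => h.1)
  have hsub : F '' RU ∪ G '' RV2 ⊆ RW := by
    rintro x (hx | hx)
    · obtain ⟨ij, hij, rfl⟩ := hx
      exact hFmem ij hij
    · obtain ⟨ij, hij, rfl⟩ := hx
      exact hGmem ij hij
  have hcard1 : (F '' RU).ncard = RU.ncard := Set.ncard_image_of_injOn hFinj
  have hcard2 : (G '' RV2).ncard = RV2.ncard := Set.ncard_image_of_injOn hGinj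
  have hunion : (F '' RU ∪ G '' RV2).ncard = RU.ncard + RV2.ncard := by
    rw [Set.ncard_union_eq hdisj (hRUfin.image F) (hRV2fin.image G), hcard1, hcard2]
  have hle : RU.ncard + RV2.ncard ≤ RW.ncard := by
    rw [← hunion]
    exact Set.ncard_le_ncard hsub hRWfin
  -- split RV
  have hRVsplit : RV = RV1 ∪ RV2 := by
    ext ⟨i, j⟩
    simp only [hRV, hRV1, hRV2, Set.mem_setOf_eq, Set.mem_union]
    constructor
    · intro h
      have hi1 : 1 ≤ i := h.1
      by_cases hc : i = 1
      · exact Or.inl ⟨h, hc⟩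
      · exact Or.inr ⟨h, by omega⟩
    · rintro (⟨h, -⟩ | ⟨h, -⟩) <;> exact h
  have hdisj12 : Disjoint RV1 RV2 := by
    rw [Set.disjoint_left]
    rintro ⟨i, j⟩ h1 h2
    have := h1.2
    have := h2.2
    simp_all
  have hRVcard : RV.ncard = RV1.ncard + RV2.ncard := by
    rw [hRVsplit]
    exact Set.ncard_union_eq hdisj12 hRV1fin hRV2fin
  -- RV1 counts runs starting at 1
  have hRV1card : RV1.ncard = {j | IsRun v 1 j}.ncard := by
    have himg : Prod.snd '' RV1 = {j | IsRun v 1 j} := by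
      ext j
      simp only [Set.mem_image, Set.mem_setOf_eq]
      constructor
      · rintro ⟨⟨i, j'⟩, ⟨hr, hi⟩, rfl⟩
        simp only at hi
        rwa [hi] at hr
      · intro h
        exact ⟨(1, j), ⟨h, rfl⟩, rfl⟩
    have hinj2 : Set.InjOn Prod.snd RV1 := by
      rintro ⟨i1, j1⟩ h1 ⟨i2, j2⟩ h2 heq
      simp only at heq
      have e1 : i1 = 1 := h1.2
      have e2 : i2 = 1 := h2.2
      simp_all
    rw [← himg, Set.ncard_image_of_injOn hinj2]
  -- put it together
  have : numRuns u = RU.ncard := rfl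
  have : numRuns v = RV.ncard := rfl
  have : numRuns (u ++ v) = RW.ncard := rfl
  show RU.ncard + RV.ncard ≤ RW.ncard + {j | IsRun v 1 j}.ncard
  omega

lemma numRuns_le_rho (w : List Bool) : numRuns w ≤ rho w.length := by
  apply le_csSup
  · refine ⟨(Set.Iic w.length ×ˢ Set.Iic w.length).ncard, ?_⟩
    rintro k ⟨w', hw', rfl⟩
    rw [← hw']
    apply Set.ncard_le_ncard _ ((Set.finite_Iic _).prod (Set.finite_Iic _))
    rintro ⟨i, j⟩ h
    simp only [Set.mem_prod, Set.mem_Iic]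
    exact ⟨le_trans (le_of_lt h.2.1) h.2.2.1, h.2.2.1⟩
  · exact ⟨w, rfl, rfl⟩

lemma exists_rho_word (N : ℕ) : ∃ w : List Bool, w.length = N ∧ numRuns w = rho N := by
  have hne : {k | ∃ w : List Bool, w.length = N ∧ numRuns w = k}.Nonempty :=
    ⟨numRuns (List.replicate N false), ⟨_, List.length_replicate, rfl⟩⟩
  have hbdd : BddAbove {k | ∃ w : List Bool, w.length = N ∧ numRuns w = k} := by
    refine ⟨(Set.Iic N ×ˢ Set.Iic N).ncard, ?_⟩
    rintro k ⟨w', hw', rfl⟩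
    apply Set.ncard_le_ncard _ ((Set.finite_Iic _).prod (Set.finite_Iic _))
    rintro ⟨i, j⟩ h
    simp only [Set.mem_prod, Set.mem_Iic]
    rw [← hw']
    exact ⟨le_trans (le_of_lt h.2.1) h.2.2.1, h.2.2.1⟩
  obtain ⟨w, hw, hk⟩ := Nat.sSup_mem hne hbdd
  exact ⟨w, hw, hk⟩

/-- `ρ(n) + ρ(m) - log_φ n ≤ ρ(m + n)` for `1 ≤ n ≤ m`. -/
theorem rho_almost_superadditive (n m : ℕ) (hn : 1 ≤ n) (hnm : n ≤ m) :
    (rho n : ℝ) + (rho m : ℝ) - Real.logb goldenRatio' n ≤ (rho (m + n) : ℝ) := by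
  obtain ⟨u, hu, hru⟩ := exists_rho_word m
  obtain ⟨v, hv, hrv⟩ := exists_rho_word n
  have hkey : numRuns u + numRuns v ≤ numRuns (u ++ v) + {j | IsRun v 1 j}.ncard :=
    numRuns_append u v (by omega) (by omega)
  have hlog : ({j | IsRun v 1 j}.ncard : ℝ) ≤ Real.logb Real.goldenRatio n := by
    have := startOne_card_le (v := v) (by omega)
    rwa [hv] at this
  have hle : numRuns (u ++ v) ≤ rho (m + n) := by
    have := numRuns_le_rho (u ++ v)
    rwa [List.length_append, hu, hv] at this
  have hgold : goldenRatio' = Real.goldenRatio := rfl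
  rw [hgold]
  have c1 : ((numRuns u : ℝ) + numRuns v) ≤
      (numRuns (u ++ v) : ℝ) + ({j | IsRun v 1 j}.ncard : ℝ) := by exact_mod_cast hkey
  have c2 : (numRuns (u ++ v) : ℝ) ≤ (rho (m + n) : ℝ) := by exact_mod_cast hle
  rw [← hru, ← hrv]
  linarith
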